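/- Let M be a partial matching on a point set P, and construct G(M) by replacing each vertex v of P by a fixed 7-vertex gadget graph H_v in which one distinguished vertex u_v has degree 2 and all other vertices have degree 3, with the edges of M joining the distinguished vertices of their endpoints' gadgets. Then M can be augmented to a perfect matching of P if and only if G(M) can be augmented to a 3-regular graph by adding edges between distinguished vertices. -/

import Mathlib

/-- The gadget construction `G(M)`: the disjoint union of a copy of the gadget
graph `H` (on vertex set `Fin 7`) for every vertex of `α`, together with an edge
between the distinguished vertices `u` of the gadgets of `v` and `w` for every
matched pair `m v w`. -/
def gadgetGraph {α : Type*} (H : SimpleGraph (Fin 7)) (u : Fin 7) (m : α → α → Prop) :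
    SimpleGraph (α × Fin 7) :=
  SimpleGraph.fromRel (fun x y =>
    (x.1 = y.1 ∧ H.Adj x.2 y.2) ∨ (x.2 = u ∧ y.2 = u ∧ m x.1 y.1))

/-- `m'` is a partial matching relation extending `m`. -/
def IsMatchingRel {α : Type*} (m : α → α → Prop) : Prop :=
  Symmetric m ∧ (∀ a, ¬ m a a) ∧ ∀ a b c, m a b → m a c → b = c

section
variable {α : Type*} (H : SimpleGraph (Fin 7)) (u : Fin 7) (m : α → α → Prop)

lemma nbr_u_eq (hs : Symmetric m) (hi : ∀ a, ¬ m a a)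
    (F : SimpleGraph (α × Fin 7)) (hF : ∀ x y, F.Adj x y → x.2 = u ∧ y.2 = u) (a : α) :
    ((gadgetGraph H u m ⊔ F).neighborSet (a,u)) =
      (fun j => (a,j)) '' H.neighborSet u ∪
      (fun b => (b,u)) '' {b | m a b ∨ F.Adj (a,u) (b,u)} := by
  ext ⟨b,j⟩
  simp only [SimpleGraph.mem_neighborSet, SimpleGraph.sup_adj, gadgetGraph,
    SimpleGraph.fromRel_adj, Set.mem_union, Set.mem_image, Set.mem_setOf_eq,
    Prod.mk.injEq, ne_eq]
  constructor
  · rintro (⟨hne, h⟩ | hFa)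
    · rcases h with (⟨h1, h2⟩ | ⟨_, h2, h3⟩) | (⟨h1, h2⟩ | ⟨h2, _, h3⟩)
      · exact Or.inl ⟨j, h2, h1, rfl⟩
      · exact Or.inr ⟨b, Or.inl h3, rfl, h2.symm⟩
      · exact Or.inl ⟨j, H.adj_symm h2, h1.symm, rfl⟩
      · exact Or.inr ⟨b, Or.inl (hs h3), rfl, h2.symm⟩
    · obtain ⟨h1, h2⟩ := hF _ _ hFa
      simp only at h1 h2
      subst h2
      exact Or.inr ⟨b, Or.inr hFa, rfl, rfl⟩
  · rintro (⟨j', hj', hab, hj⟩ | ⟨b', (hb' | hb'), hb, hju⟩)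
    · subst hab; subst hj
      refine Or.inl ⟨?_, Or.inl (Or.inl ⟨rfl, hj'⟩)⟩
      simp only [Prod.mk.injEq, not_and]
      intro _; exact fun h => H.irrefl (h ▸ hj')
    · subst hb; subst hju
      refine Or.inl ⟨?_, Or.inl (Or.inr (by simp [hb']))⟩
      simp only [Prod.mk.injEq, and_true]
      rintro rfl; exact hi _ hb'
    · subst hb; subst hju
      exact Or.inr hb'

lemma nbr_i_eq (F : SimpleGraph (α × Fin 7)) (hF : ∀ x y, F.Adj x y → x.2 = u ∧ y.2 = u)
    (a : α) (i : Fin 7) (hi : i ≠ u) :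
    ((gadgetGraph H u m ⊔ F).neighborSet (a,i)) = (fun j => (a,j)) '' H.neighborSet i := by
  ext ⟨b,j⟩
  simp only [SimpleGraph.mem_neighborSet, SimpleGraph.sup_adj, gadgetGraph,
    SimpleGraph.fromRel_adj, Set.mem_image, Prod.mk.injEq, ne_eq]
  constructor
  · rintro (⟨hne, h⟩ | hFa)
    · rcases h with (⟨h1, h2⟩ | ⟨h2, _, _⟩) | (⟨h1, h2⟩ | ⟨_, h2, _⟩)
      · exact ⟨j, h2, h1, rfl⟩
      · exact absurd h2 hi
      · exact ⟨j, H.adj_symm h2, h1.symm, rfl⟩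
      · exact absurd h2 hi
    · exact absurd (hF _ _ hFa).1 hi
  · rintro ⟨j', hj', hab, hj⟩
    subst hab; subst hj
    refine Or.inl ⟨?_, Or.inl (Or.inl ⟨rfl, hj'⟩)⟩
    simp only [Prod.mk.injEq, not_and]
    intro _; exact fun h => H.irrefl (h ▸ hj')

end

section
variable {α : Type*} [Fintype α] (H : SimpleGraph (Fin 7)) (u : Fin 7) (m : α → α → Prop)

lemma ncard_nbr_u (hu : (H.neighborSet u).ncard = 2) (hs : Symmetric m) (hi : ∀ a, ¬ m a a)
    (F : SimpleGraph (α × Fin 7)) (hF : ∀ x y, F.Adj x y → x.2 = u ∧ y.2 = u) (a : α) :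
    ((gadgetGraph H u m ⊔ F).neighborSet (a,u)).ncard =
      2 + {b | m a b ∨ F.Adj (a,u) (b,u)}.ncard := by
  rw [nbr_u_eq H u m hs hi F hF a, Set.ncard_union_eq, Set.ncard_image_of_injective,
    Set.ncard_image_of_injective, hu]
  · exact fun x y h => by simpa using h
  · exact fun x y h => by simpa using h
  · rw [Set.disjoint_left]
    rintro x ⟨j, hj, rfl⟩ ⟨b, hb, hbx⟩
    have : j ≠ u := fun h => H.irrefl (h ▸ hj)
    exact this (by simpa using (congrArg Prod.snd hbx).symm)

lemma ncard_nbr_i (hH : ∀ i : Fin 7, i ≠ u → (H.neighborSet i).ncard = 3)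
    (F : SimpleGraph (α × Fin 7)) (hF : ∀ x y, F.Adj x y → x.2 = u ∧ y.2 = u)
    (a : α) (i : Fin 7) (hi : i ≠ u) :
    ((gadgetGraph H u m ⊔ F).neighborSet (a,i)).ncard = 3 := by
  rw [nbr_i_eq H u m F hF a i hi, Set.ncard_image_of_injective, hH i hi]
  exact fun x y h => by simpa using h

end


theorem matching_augmentation_iff_cubic_augmentation
    {α : Type*} [Fintype α] (H : SimpleGraph (Fin 7)) (u : Fin 7)
    (hu : (H.neighborSet u).ncard = 2)
    (hH : ∀ i : Fin 7, i ≠ u → (H.neighborSet i).ncard = 3)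
    (m : α → α → Prop) (hm : IsMatchingRel m) :
    (∃ m' : α → α → Prop, IsMatchingRel m' ∧ (∀ a b, m a b → m' a b) ∧
      ∀ a, ∃ b, m' a b) ↔
    (∃ F : SimpleGraph (α × Fin 7),
      (∀ x y, F.Adj x y → x.2 = u ∧ y.2 = u) ∧
      (∀ x y, F.Adj x y → ¬ (gadgetGraph H u m).Adj x y) ∧
      ∀ x, (((gadgetGraph H u m) ⊔ F).neighborSet x).ncard = 3) := by
  obtain ⟨msymm, mirr, muniq⟩ := hm
  constructor
  · rintro ⟨m', ⟨m'symm, m'irr, m'uniq⟩, hext, htot⟩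
    let F : SimpleGraph (α × Fin 7) :=
      { Adj := fun x y => x.2 = u ∧ y.2 = u ∧ m' x.1 y.1 ∧ ¬ m x.1 y.1
        symm := by
          refine ⟨?_⟩; rintro x y ⟨h1, h2, h3, h4⟩
          exact ⟨h2, h1, m'symm h3, fun h => h4 (msymm h)⟩
        loopless := by
          refine ⟨?_⟩; rintro x ⟨_, _, h3, _⟩
          exact m'irr _ h3 }
    have hF1 : ∀ x y, F.Adj x y → x.2 = u ∧ y.2 = u := fun x y h => ⟨h.1, h.2.1⟩
    refine ⟨F, hF1, ?_, ?_⟩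
    · rintro ⟨a, i⟩ ⟨b, j⟩ ⟨h1, h2, h3, h4⟩ hadj
      simp only at h1 h2 h3 h4
      subst h1; subst h2
      rw [gadgetGraph, SimpleGraph.fromRel_adj] at hadj
      rcases hadj.2 with (⟨_, hA⟩ | ⟨_, _, hm2⟩) | (⟨_, hA⟩ | ⟨_, _, hm2⟩)
      · exact H.irrefl hA
      · exact h4 hm2
      · exact H.irrefl hA
      · exact h4 (msymm hm2)
    · rintro ⟨a, i⟩
      by_cases hiu : i = u
      · subst i
        rw [ncard_nbr_u H u m hu msymm mirr F hF1 a]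
        have hS : {b | m a b ∨ (⟨a, u⟩ : α × Fin 7).2 = u ∧ (⟨b, u⟩ : α × Fin 7).2 = u ∧
            m' a b ∧ ¬ m a b} = {b | m' a b} := by
          ext b
          simp only [Set.mem_setOf_eq]
          constructor
          · rintro (h | ⟨_, _, h, _⟩)
            · exact hext _ _ h
            · exact h
          · intro h
            by_cases hab : m a b
            · exact Or.inl hab
            · exact Or.inr ⟨by trivial, by trivial, h, hab⟩
        have hS' : {b | m a b ∨ F.Adj (a, u) (b, u)} = {b | m' a b} := hS
        rw [hS']
        obtain ⟨b, hb⟩ := htot a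
        rw [show {b' | m' a b'} = {b} from
          Set.eq_singleton_iff_unique_mem.mpr ⟨hb, fun c hc => m'uniq a c b hc hb⟩,
          Set.ncard_singleton]
      · exact ncard_nbr_i H u m hH F hF1 a i hiu
  · rintro ⟨F, hF1, hF2, hdeg⟩
    have hcard : ∀ a, {b | m a b ∨ F.Adj (a, u) (b, u)}.ncard = 1 := by
      intro a
      have := hdeg (a, u)
      rw [ncard_nbr_u H u m hu msymm mirr F hF1 a] at this
      omega
    refine ⟨fun a b => m a b ∨ F.Adj (a, u) (b, u), ⟨?_, ?_, ?_⟩,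
      fun a b h => Or.inl h, ?_⟩
    · rintro a b (h | h)
      · exact Or.inl (msymm h)
      · exact Or.inr (F.adj_symm h)
    · rintro a (h | h)
      · exact mirr a h
      · exact F.loopless.irrefl _ h
    · intro a b c hb hc
      obtain ⟨d, hd⟩ := Set.ncard_eq_one.mp (hcard a)
      have hbd : b = d := by rw [Set.eq_singleton_iff_unique_mem] at hd; exact hd.2 b hb
      have hcd : c = d := by rw [Set.eq_singleton_iff_unique_mem] at hd; exact hd.2 c hc
      rw [hbd, hcd]
    · intro a
      obtain ⟨d, hd⟩ := Set.ncard_eq_one.mp (hcard a)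
      refine ⟨d, ?_⟩
      have : d ∈ {b | m a b ∨ F.Adj (a, u) (b, u)} := by rw [hd]; exact rfl
      exact this
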